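/- Consequence for query coverage (Lemma on fragment words): under the odd/even association rule above, if a query Q satisfies Q ⊆ ⋃_{j=a}^{b} F j for some interval [a, b] with a ≤ b, then there exists an index i ∈ [a, b] with Q ⊆ assoc(i). Thus any trajectory matching the query inside a union of adjacent cells is retrievable from a single cell whose associated keyword set covers Q. -/
import Mathlib


open Finset

/-- Keyword set associated with fragment i (fragments are 1-indexed). -/
def assoc {W : Type*} (m : ℕ) (F : ℕ → Set W) (i : ℕ) : Set W :=
  if Odd i then F i else ⋃ j ∈ Finset.Icc 1 (min (i + 1) m), F j

theorem stmt_12 {W : Type*} (m : ℕ) (F : ℕ → Set W) (Q : Set W) :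
    ∀ a b, 1 ≤ a → a ≤ b → b ≤ m → Q ⊆ (⋃ j ∈ Finset.Icc a b, F j) →
      ∃ i, a ≤ i ∧ i ≤ b ∧ Q ⊆ assoc m F i := by
  intro a b ha hab hbm hQ
  rcases Nat.even_or_odd b with hb | hb
  · refine ⟨b, hab, le_refl b, ?_⟩
    have : ¬ Odd b := Nat.not_odd_iff_even.mpr hb
    rw [assoc, if_neg this]
    refine hQ.trans (Set.iUnion₂_subset fun j hj => ?_)
    simp only [Finset.mem_Icc] at hj
    exact Set.subset_biUnion_of_mem (Finset.mem_Icc.mpr (by omega))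
  · rcases eq_or_lt_of_le hab with rfl | hlt
    · refine ⟨a, le_refl a, le_refl a, ?_⟩
      rw [assoc, if_pos hb]
      refine hQ.trans ?_
      intro x hx
      simp only [Set.mem_iUnion, Finset.mem_Icc] at hx
      obtain ⟨j, ⟨h1, h2⟩, hxj⟩ := hx
      have : j = a := le_antisymm h2 h1
      rwa [← this]
    · refine ⟨b - 1, by omega, by omega, ?_⟩
      have : ¬ Odd (b - 1) := by
        rcases hb with ⟨k, rfl⟩
        simp [Nat.odd_iff, Nat.even_iff]
      rw [assoc, if_neg this]
      refine hQ.trans (Set.iUnion₂_subset fun j hj => ?_)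
      simp only [Finset.mem_Icc] at hj
      exact Set.subset_biUnion_of_mem (Finset.mem_Icc.mpr (by omega))
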